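/- Let F be a biset-family on T such that both F and its reverse F̄ are closed under intersection of intersecting members (inner parts), and suppose s out-covers a set C of cores of F^k, and S is a star with center s containing one edge from s into the inner part of each member of C. Then ν(F^k_S) ≤ ν(F^k) − |C|/2, i.e., adding the star S reduces the number of cores by at least half the number of out-covered cores: every core of the residual family F^k_S contains either a core of F^k not in C, or at least two cores in C. -/

import Mathlib

open Finset
open scoped Classical

/-- A biset on ground set `T` is a pair `(X, X⁺)` with `X ⊆ X⁺ ⊆ T`. -/
def IsBisetOn {α : Type*} (T : Finset α) (A : Finset α × Finset α) : Prop :=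
  A.1 ⊆ A.2 ∧ A.2 ⊆ T

/-- `k`-regular biset-family. -/
def KRegular {α : Type*} [DecidableEq α] (T : Finset α) (k : ℕ)
    (F : Finset (Finset α × Finset α)) : Prop :=
  (∀ A ∈ F, (A.2 \ A.1).card ≤ k) ∧
  ∀ A ∈ F, ∀ B ∈ F, (A.1 ∩ B.1).Nonempty → (A.1 ∪ B.1).card + k + 1 ≤ T.card →
    (A.1 ∩ B.1, A.2 ∩ B.2) ∈ F ∧ (A.1 ∪ B.1, A.2 ∪ B.2) ∈ F

/-- `F^k`: members with `2|X| ≤ |T| - k`. -/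
def smallPart {α : Type*} [DecidableEq α] (T : Finset α) (k : ℕ)
    (F : Finset (Finset α × Finset α)) : Finset (Finset α × Finset α) :=
  F.filter fun A => 2 * A.1.card + k ≤ T.card

/-- The reverse family `F̄ = {(T \ X⁺, T \ X) : (X,X⁺) ∈ F}`. -/
def revFam {α : Type*} [DecidableEq α] (T : Finset α)
    (F : Finset (Finset α × Finset α)) : Finset (Finset α × Finset α) :=
  F.image fun A => (T \ A.2, T \ A.1)

/-- Containment order on bisets. -/
def BisetLE {α : Type*} [DecidableEq α] (A B : Finset α × Finset α) : Prop :=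
  A.1 ⊂ B.1 ∨ (A.1 = B.1 ∧ A.2 ⊆ B.2)

/-- A core of `F` is an inclusion-minimal member of `F`. -/
def IsCore {α : Type*} [DecidableEq α] (F : Finset (Finset α × Finset α))
    (A : Finset α × Finset α) : Prop :=
  A ∈ F ∧ ∀ B ∈ F, BisetLE B A → B = A

/-- The members of `F` containing the core `C` and no other core of `F`. -/
noncomputable def exclMembers {α : Type*} [DecidableEq α]
    (F : Finset (Finset α × Finset α)) (C : Finset α × Finset α) :
    Finset (Finset α × Finset α) :=
  F.filter fun A => BisetLE C A ∧ ∀ C', IsCore F C' → BisetLE C' A → C' = C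

/-- The outer part `U_C⁺` of `Û_C`, the componentwise union of all members of `F`
containing the core `C` and no other core. -/
noncomputable def outerUnion {α : Type*} [DecidableEq α]
    (F : Finset (Finset α × Finset α)) (C : Finset α × Finset α) : Finset α :=
  (exclMembers F C).sup Prod.snd

/-- An edge `(u,v)` covers `(X,X⁺)` if `u ∈ X` and `v ∈ T \ X⁺`. -/
def EdgeCovers {α : Type*} [DecidableEq α] (T : Finset α) (e : α × α)
    (A : Finset α × Finset α) : Prop :=
  e.1 ∈ A.1 ∧ e.2 ∈ T \ A.2

/-- `ν`: maximum number of members with pairwise-disjoint inner parts. -/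
noncomputable def nuBiset {α : Type*} [DecidableEq α]
    (F : Finset (Finset α × Finset α)) : ℕ :=
  F.powerset.sup fun G =>
    if (G : Set (Finset α × Finset α)).Pairwise (fun A B => Disjoint A.1 B.1)
    then G.card else 0

section AuxStmt19

variable {α : Type*} [DecidableEq α]

lemma bisetLE_refl' (A : Finset α × Finset α) : BisetLE A A :=
  Or.inr ⟨rfl, Finset.Subset.rfl⟩

lemma bisetLE_fst_subset' {A B : Finset α × Finset α} (h : BisetLE A B) : A.1 ⊆ B.1 := by
  rcases h with h | ⟨h, _⟩
  · exact h.subset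
  · exact h ▸ Finset.Subset.rfl

lemma bisetLE_trans' {A B C : Finset α × Finset α}
    (h1 : BisetLE A B) (h2 : BisetLE B C) : BisetLE A C := by
  rcases h1 with h1 | ⟨e1, s1⟩ <;> rcases h2 with h2 | ⟨e2, s2⟩
  · exact Or.inl (h1.trans h2)
  · exact Or.inl (e2 ▸ h1)
  · exact Or.inl (e1 ▸ h2)
  · exact Or.inr ⟨e1.trans e2, s1.trans s2⟩

lemma bisetLE_of_subsets' {A B : Finset α × Finset α}
    (h1 : A.1 ⊆ B.1) (h2 : A.2 ⊆ B.2) : BisetLE A B := by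
  rcases eq_or_ne A.1 B.1 with h | h
  · exact Or.inr ⟨h, h2⟩
  · exact Or.inl (Finset.ssubset_iff_subset_ne.mpr ⟨h1, h⟩)

/-- Every member of a finite biset family has a core below it. -/
lemma exists_core_below' (T : Finset α) (Fk : Finset (Finset α × Finset α))
    (hT : ∀ A ∈ Fk, A.2 ⊆ T) :
    ∀ A ∈ Fk, ∃ D, IsCore Fk D ∧ BisetLE D A := by
  have key : ∀ n : ℕ, ∀ A ∈ Fk, (T.card + 1) * A.1.card + A.2.card ≤ n →
      ∃ D, IsCore Fk D ∧ BisetLE D A := by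
    intro n
    induction n with
    | zero =>
      intro A hA hm
      have h2 : A.2.card = 0 := by omega
      have h1 : A.1.card = 0 := by
        have hmul : (T.card + 1) * A.1.card = 0 := by omega
        rcases Nat.mul_eq_zero.mp hmul with h | h
        · omega
        · exact h
      have hA1 : A.1 = ∅ := Finset.card_eq_zero.mp h1
      have hA2 : A.2 = ∅ := Finset.card_eq_zero.mp h2
      refine ⟨A, ⟨hA, ?_⟩, bisetLE_refl' A⟩
      intro B hB hBA
      rcases hBA with h | ⟨e, ss⟩
      · rw [hA1] at h
        exact absurd h (Finset.not_ssubset_empty _)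
      · have : B.2 = A.2 := by
          rw [hA2] at ss ⊢
          exact Finset.subset_empty.mp ss
        exact Prod.ext e this
    | succ n ih =>
      intro A hA hm
      by_cases hc : ∀ B ∈ Fk, BisetLE B A → B = A
      · exact ⟨A, ⟨hA, hc⟩, bisetLE_refl' A⟩
      · push_neg at hc
        obtain ⟨B, hB, hBA, hne⟩ := hc
        have hlt : (T.card + 1) * B.1.card + B.2.card ≤ n := by
          have hBT : B.2.card ≤ T.card := Finset.card_le_card (hT B hB)
          rcases hBA with h | ⟨e, ss⟩
          · have h1 : B.1.card + 1 ≤ A.1.card := Finset.card_lt_card h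
            have hmm : (T.card + 1) * (B.1.card + 1) ≤ (T.card + 1) * A.1.card :=
              Nat.mul_le_mul_left _ h1
            have hexp : (T.card + 1) * (B.1.card + 1)
                = (T.card + 1) * B.1.card + (T.card + 1) := by ring
            have hfin : (T.card + 1) * A.1.card ≤ n + 1 :=
              le_trans (Nat.le_add_right _ _) hm
            omega
          · have hss : B.2 ⊂ A.2 := by
              refine Finset.ssubset_iff_subset_ne.mpr ⟨ss, fun he => hne (Prod.ext e he)⟩
            have h2 : B.2.card < A.2.card := Finset.card_lt_card hss
            have : (T.card + 1) * B.1.card = (T.card + 1) * A.1.card := by rw [e]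
            omega
        obtain ⟨D, hD, hDB⟩ := ih B hB hlt
        exact ⟨D, hD, bisetLE_trans' hDB hBA⟩
  intro A hA
  exact key ((T.card + 1) * A.1.card + A.2.card) A hA le_rfl

end AuxStmt19

/-- If `F` and its reverse family are closed under intersection of intersecting
members, `s` out-covers a set `𝒞` of cores of `F^k`, and `S` is a star with center
`s` having one edge from the inner part of each member of `𝒞` to `s`, then
`ν(F^k_S) ≤ ν(F^k) - |𝒞|/2`, i.e. `2·ν(F^k_S) + |𝒞| ≤ 2·ν(F^k)`, where `F^k_S` is
the subfamily of members of `F^k` not covered by any edge of `S`. -/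
theorem stmt_19 {α : Type*} [DecidableEq α] (T : Finset α) (k : ℕ) (hk : k < T.card)
    (F : Finset (Finset α × Finset α))
    (hB : ∀ A ∈ F, IsBisetOn T A)
    (hreg : KRegular T k F)
    (hF : ∀ A ∈ F, ∀ B ∈ F, (A.1 ∩ B.1).Nonempty → (A.1 ∩ B.1, A.2 ∩ B.2) ∈ F)
    (hFrev : ∀ A ∈ revFam T F, ∀ B ∈ revFam T F, (A.1 ∩ B.1).Nonempty →
      (A.1 ∩ B.1, A.2 ∩ B.2) ∈ revFam T F)
    (s : α) (hs : s ∈ T)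
    (𝒞 : Finset (Finset α × Finset α))
    (h𝒞 : ∀ A ∈ 𝒞, IsCore (smallPart T k F) A)
    (hout : ∀ A ∈ 𝒞, s ∈ T \ outerUnion (smallPart T k F) A)
    (S : Finset (α × α))
    (hScenter : ∀ e ∈ S, e.2 = s)
    (hS : ∀ A ∈ 𝒞, ∃ c ∈ A.1, (c, s) ∈ S) :
    2 * nuBiset ((smallPart T k F).filter fun A => ∀ e ∈ S, ¬ EdgeCovers T e A) + 𝒞.card
      ≤ 2 * nuBiset (smallPart T k F) := by
  classical
  set Fk := smallPart T k F with hFkdef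
  set FS := Fk.filter (fun A => ∀ e ∈ S, ¬ EdgeCovers T e A) with hFSdef
  set f : Finset (Finset α × Finset α) → ℕ := fun G =>
    if (G : Set (Finset α × Finset α)).Pairwise (fun A B => Disjoint A.1 B.1)
    then G.card else 0 with hfdef
  -- basic membership facts
  have hFkF : ∀ A ∈ Fk, A ∈ F := by
    intro A hA
    exact (Finset.mem_filter.mp hA).1
  have hFkcard : ∀ A ∈ Fk, 2 * A.1.card + k ≤ T.card := by
    intro A hA
    exact (Finset.mem_filter.mp hA).2
  have hFkT : ∀ A ∈ Fk, A.2 ⊆ T := fun A hA => (hB A (hFkF A hA)).2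
  have hFSFk : ∀ A ∈ FS, A ∈ Fk := fun A hA => (Finset.mem_filter.mp hA).1
  -- intersection closedness of Fk
  have hclosed : ∀ A ∈ Fk, ∀ C ∈ Fk, (A.1 ∩ C.1).Nonempty →
      (A.1 ∩ C.1, A.2 ∩ C.2) ∈ Fk := by
    intro A hA C hC hne
    refine Finset.mem_filter.mpr ⟨hF A (hFkF A hA) C (hFkF C hC) hne, ?_⟩
    have hle : (A.1 ∩ C.1).card ≤ A.1.card := Finset.card_le_card Finset.inter_subset_left
    have := hFkcard A hA
    show 2 * (A.1 ∩ C.1).card + k ≤ T.card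
    omega
  -- a core meeting a member is contained in it
  have hcontain : ∀ C, IsCore Fk C → ∀ A ∈ Fk, ¬ Disjoint A.1 C.1 →
      C.1 ⊆ A.1 ∧ C.2 ⊆ A.2 ∧ BisetLE C A := by
    intro C hC A hA hnd
    have hne : (A.1 ∩ C.1).Nonempty := Finset.not_disjoint_iff_nonempty_inter.mp hnd
    have hmem : (A.1 ∩ C.1, A.2 ∩ C.2) ∈ Fk := hclosed A hA C hC.1 hne
    have hle : BisetLE (A.1 ∩ C.1, A.2 ∩ C.2) C :=
      bisetLE_of_subsets' Finset.inter_subset_right Finset.inter_subset_right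
    have heq := hC.2 _ hmem hle
    have h1 : A.1 ∩ C.1 = C.1 := congrArg Prod.fst heq
    have h2 : A.2 ∩ C.2 = C.2 := congrArg Prod.snd heq
    have hs1 : C.1 ⊆ A.1 := h1 ▸ Finset.inter_subset_left
    have hs2 : C.2 ⊆ A.2 := h2 ▸ Finset.inter_subset_left
    exact ⟨hs1, hs2, bisetLE_of_subsets' hs1 hs2⟩
  -- distinct cores have disjoint inner parts
  have hcores : ∀ X, IsCore Fk X → ∀ Y, IsCore Fk Y → X ≠ Y → Disjoint X.1 Y.1 := by
    intro X hX Y hY hne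
    by_contra hnd
    have h1 := hcontain Y hY X hX.1 hnd
    have h2 : ¬ Disjoint Y.1 X.1 := fun h => hnd h.symm
    have h3 := hcontain X hX Y hY.1 h2
    exact hne (Prod.ext (Finset.Subset.antisymm h3.1 h1.1)
      (Finset.Subset.antisymm h3.2.1 h1.2.1))
  -- inner parts of members of 𝒞 are nonempty
  have h𝒞ne : ∀ C ∈ 𝒞, C.1.Nonempty := by
    intro C hC
    obtain ⟨c, hc, _⟩ := hS C hC
    exact ⟨c, hc⟩
  -- main covering lemma
  have hmain : ∀ A ∈ FS, ∀ C ∈ 𝒞, BisetLE C A →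
      ∃ D, IsCore Fk D ∧ BisetLE D A ∧ D ≠ C := by
    intro A hA C hC hCA
    by_contra hcon
    push_neg at hcon
    have hAFk : A ∈ Fk := hFSFk A hA
    have hunc : ∀ e ∈ S, ¬ EdgeCovers T e A := (Finset.mem_filter.mp hA).2
    have hexcl : A ∈ exclMembers Fk C := by
      refine Finset.mem_filter.mpr ⟨hAFk, hCA, ?_⟩
      intro C' hC' hC'A
      exact hcon C' hC' hC'A
    have hsub : A.2 ⊆ (exclMembers Fk C).sup Prod.snd := Finset.le_sup hexcl
    have hsout := hout C hC
    rw [Finset.mem_sdiff] at hsout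
    have hsA2 : s ∉ A.2 := by
      intro h
      exact hsout.2 (by simpa [outerUnion] using hsub h)
    obtain ⟨c, hc, hcS⟩ := hS C hC
    exact hunc _ hcS ⟨bisetLE_fst_subset' hCA hc, Finset.mem_sdiff.mpr ⟨hs, hsA2⟩⟩
  -- lower bound for the sup by a disjoint subfamily
  have hnu_ge : ∀ H : Finset (Finset α × Finset α), H ⊆ Fk →
      (↑H : Set (Finset α × Finset α)).Pairwise (fun A B => Disjoint A.1 B.1) →
      H.card ≤ Fk.powerset.sup f := by
    intro H hsub hpair
    have h1 : H ∈ Fk.powerset := Finset.mem_powerset.mpr hsub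
    calc H.card = f H := by rw [hfdef]; simp only [if_pos hpair]
    _ ≤ Fk.powerset.sup f := Finset.le_sup h1
  -- 𝒞 itself is a disjoint subfamily
  have h𝒞sub : 𝒞 ⊆ Fk := fun C hC => (h𝒞 C hC).1
  have h𝒞pair : (↑𝒞 : Set (Finset α × Finset α)).Pairwise (fun A B => Disjoint A.1 B.1) := by
    intro X hX Y hY hne
    exact hcores X (h𝒞 X hX) Y (h𝒞 Y hY) hne
  have h𝒞nu : 𝒞.card ≤ Fk.powerset.sup f := hnu_ge 𝒞 h𝒞sub h𝒞pair
  -- unfold the goal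
  simp only [nuBiset]
  rw [← hfdef]
  obtain ⟨G, hGmem, hGeq⟩ :=
    Finset.exists_mem_eq_sup FS.powerset ⟨∅, Finset.empty_mem_powerset FS⟩ f
  rw [hGeq]
  have hfG : f G = if (↑G : Set (Finset α × Finset α)).Pairwise
      (fun A B => Disjoint A.1 B.1) then G.card else 0 := by rw [hfdef]
  rw [hfG]
  by_cases hp : (↑G : Set (Finset α × Finset α)).Pairwise (fun A B => Disjoint A.1 B.1)
  swap
  · simp only [if_neg hp]
    omega
  simp only [if_pos hp]
  -- main construction
  have hGFS : G ⊆ FS := Finset.mem_powerset.mp hGmem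
  have hGFk : ∀ A ∈ G, A ∈ Fk := fun A hA => hFSFk A (hGFS hA)
  have hGdisj : ∀ A ∈ G, ∀ B ∈ G, ¬ Disjoint A.1 B.1 → A = B := by
    intro A hA B hB hnd
    by_contra hne
    exact hnd (hp (Finset.mem_coe.mpr hA) (Finset.mem_coe.mpr hB) hne)
  set t : Finset α × Finset α → Finset (Finset α × Finset α) :=
    fun A => 𝒞.filter (fun C => ¬ Disjoint A.1 C.1) with htdef
  set G₀ := G.filter (fun A => (t A).card = 0) with hG₀def
  set G₁ := G.filter (fun A => 2 ≤ (t A).card) with hG₁def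
  set G₂ := G.filter (fun A => (t A).card = 1) with hG₂def
  -- choose a replacement core for members of G₂
  have hex : ∀ A : Finset α × Finset α, ∃ D, A ∈ G₂ →
      IsCore Fk D ∧ BisetLE D A ∧ D ∉ 𝒞 ∧ D.1.Nonempty := by
    intro A
    by_cases hA : A ∈ G₂
    swap
    · exact ⟨A, fun h => absurd h hA⟩
    have hAG : A ∈ G := (Finset.mem_filter.mp hA).1
    have hA1 : (t A).card = 1 := (Finset.mem_filter.mp hA).2
    obtain ⟨C, hCeq⟩ := Finset.card_eq_one.mp hA1
    have hCmem : C ∈ t A := hCeq ▸ Finset.mem_singleton_self C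
    have hC𝒞 : C ∈ 𝒞 := (Finset.mem_filter.mp hCmem).1
    have hCnd : ¬ Disjoint A.1 C.1 := (Finset.mem_filter.mp hCmem).2
    have hCA : BisetLE C A := (hcontain C (h𝒞 C hC𝒞) A (hGFk A hAG) hCnd).2.2
    obtain ⟨D, hDcore, hDA, hDC⟩ := hmain A (hGFS hAG) C hC𝒞 hCA
    have hDne : D.1.Nonempty := by
      by_contra hemp
      rw [Finset.not_nonempty_iff_eq_empty] at hemp
      have hDle : BisetLE D C := by
        left
        rw [hemp]
        exact Finset.empty_ssubset.mpr (h𝒞ne C hC𝒞)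
      exact hDC ((h𝒞 C hC𝒞).2 D hDcore.1 hDle)
    have hD𝒞 : D ∉ 𝒞 := by
      intro hD
      have hDsub : D.1 ⊆ A.1 := bisetLE_fst_subset' hDA
      have hnd : ¬ Disjoint A.1 D.1 := by
        obtain ⟨d, hd⟩ := hDne
        exact Finset.not_disjoint_iff.mpr ⟨d, hDsub hd, hd⟩
      have : D ∈ t A := Finset.mem_filter.mpr ⟨hD, hnd⟩
      rw [hCeq, Finset.mem_singleton] at this
      exact hDC this
    exact ⟨D, fun _ => ⟨hDcore, hDA, hD𝒞, hDne⟩⟩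
  choose g hg using hex
  -- the new disjoint family
  set H := G₀ ∪ 𝒞 ∪ G₂.image g with hHdef
  have hG₀G : G₀ ⊆ G := Finset.filter_subset _ _
  have hG₂G : G₂ ⊆ G := Finset.filter_subset _ _
  have hG₁G : G₁ ⊆ G := Finset.filter_subset _ _
  -- facts about g
  have hgcore : ∀ A ∈ G₂, IsCore Fk (g A) := fun A hA => (hg A hA).1
  have hgle : ∀ A ∈ G₂, (g A).1 ⊆ A.1 := fun A hA => bisetLE_fst_subset' (hg A hA).2.1
  have hg𝒞 : ∀ A ∈ G₂, g A ∉ 𝒞 := fun A hA => (hg A hA).2.2.1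
  have hgne : ∀ A ∈ G₂, (g A).1.Nonempty := fun A hA => (hg A hA).2.2.2
  have hgnd : ∀ A ∈ G₂, ¬ Disjoint (g A).1 A.1 := by
    intro A hA
    obtain ⟨d, hd⟩ := hgne A hA
    exact Finset.not_disjoint_iff.mpr ⟨d, hd, hgle A hA hd⟩
  -- H is a subfamily of Fk
  have hHsub : H ⊆ Fk := by
    intro X hX
    rcases Finset.mem_union.mp hX with hX | hX
    · rcases Finset.mem_union.mp hX with hX | hX
      · exact hGFk X (hG₀G hX)
      · exact h𝒞sub hX
    · obtain ⟨A, hA, rfl⟩ := Finset.mem_image.mp hX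
      exact (hgcore A hA).1
  -- classification helper
  have hcoreH : ∀ X, (X ∈ 𝒞 ∨ ∃ A ∈ G₂, g A = X) → IsCore Fk X := by
    rintro X (hX | ⟨A, hA, rfl⟩)
    · exact h𝒞 X hX
    · exact hgcore A hA
  have hG₀disjcore : ∀ X ∈ G₀, ∀ Y, (Y ∈ 𝒞 ∨ ∃ A ∈ G₂, g A = Y) → Disjoint X.1 Y.1 := by
    rintro X hX Y (hY | ⟨A, hA, rfl⟩)
    · have ht0 : (t X).card = 0 := (Finset.mem_filter.mp hX).2
      have ht : t X = ∅ := Finset.card_eq_zero.mp ht0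
      by_contra hnd
      have : Y ∈ t X := Finset.mem_filter.mpr ⟨hY, hnd⟩
      rw [ht] at this
      exact absurd this (Finset.notMem_empty Y)
    · by_contra hnd
      have hsub : (g A).1 ⊆ A.1 := hgle A hA
      have hndXA : ¬ Disjoint X.1 A.1 := by
        obtain ⟨x, hx1, hx2⟩ := Finset.not_disjoint_iff.mp hnd
        exact Finset.not_disjoint_iff.mpr ⟨x, hx1, hsub hx2⟩
      have hXA : X = A := hGdisj X (hG₀G hX) A (hG₂G hA) hndXA
      have h0 : (t X).card = 0 := (Finset.mem_filter.mp hX).2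
      have h1 : (t A).card = 1 := (Finset.mem_filter.mp hA).2
      rw [hXA] at h0
      omega
  -- H is pairwise disjoint
  have hHpair : (↑H : Set (Finset α × Finset α)).Pairwise (fun A B => Disjoint A.1 B.1) := by
    intro X hX Y hY hne
    have hmemX : X ∈ G₀ ∨ (X ∈ 𝒞 ∨ ∃ A ∈ G₂, g A = X) := by
      rcases Finset.mem_union.mp (Finset.mem_coe.mp hX) with h | h
      · rcases Finset.mem_union.mp h with h | h
        · exact Or.inl h
        · exact Or.inr (Or.inl h)
      · obtain ⟨A, hA, rfl⟩ := Finset.mem_image.mp h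
        exact Or.inr (Or.inr ⟨A, hA, rfl⟩)
    have hmemY : Y ∈ G₀ ∨ (Y ∈ 𝒞 ∨ ∃ A ∈ G₂, g A = Y) := by
      rcases Finset.mem_union.mp (Finset.mem_coe.mp hY) with h | h
      · rcases Finset.mem_union.mp h with h | h
        · exact Or.inl h
        · exact Or.inr (Or.inl h)
      · obtain ⟨A, hA, rfl⟩ := Finset.mem_image.mp h
        exact Or.inr (Or.inr ⟨A, hA, rfl⟩)
    rcases hmemX with hX0 | hXc <;> rcases hmemY with hY0 | hYc
    · exact hp (Finset.mem_coe.mpr (hG₀G hX0)) (Finset.mem_coe.mpr (hG₀G hY0)) hne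
    · exact hG₀disjcore X hX0 Y hYc
    · exact (hG₀disjcore Y hY0 X hXc).symm
    · exact hcores X (hcoreH X hXc) Y (hcoreH Y hYc) hne
  -- cardinality of H
  have hd1 : Disjoint G₀ 𝒞 := by
    rw [Finset.disjoint_left]
    intro a h0 hc
    have ht0 : (t a).card = 0 := (Finset.mem_filter.mp h0).2
    have ht : t a = ∅ := Finset.card_eq_zero.mp ht0
    have hnd : ¬ Disjoint a.1 a.1 := by
      obtain ⟨x, hx⟩ := h𝒞ne a hc
      exact Finset.not_disjoint_iff.mpr ⟨x, hx, hx⟩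
    have : a ∈ t a := Finset.mem_filter.mpr ⟨hc, hnd⟩
    rw [ht] at this
    exact absurd this (Finset.notMem_empty a)
  have hd2 : Disjoint (G₀ ∪ 𝒞) (G₂.image g) := by
    rw [Finset.disjoint_right]
    intro x hx hmem
    obtain ⟨A, hA, rfl⟩ := Finset.mem_image.mp hx
    rcases Finset.mem_union.mp hmem with h | h
    · -- g A ∈ G₀
      have hndXA : ¬ Disjoint (g A).1 A.1 := hgnd A hA
      have heq : g A = A := hGdisj (g A) (hG₀G h) A (hG₂G hA) hndXA
      have h0 : (t (g A)).card = 0 := (Finset.mem_filter.mp h).2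
      have h1 : (t A).card = 1 := (Finset.mem_filter.mp hA).2
      rw [heq] at h0
      omega
    · exact hg𝒞 A hA h
  have hinj : Set.InjOn g ↑G₂ := by
    intro A hA B hB heq
    have hA' : A ∈ G₂ := Finset.mem_coe.mp hA
    have hB' : B ∈ G₂ := Finset.mem_coe.mp hB
    have hnd : ¬ Disjoint A.1 B.1 := by
      obtain ⟨d, hd⟩ := hgne A hA'
      refine Finset.not_disjoint_iff.mpr ⟨d, hgle A hA' hd, ?_⟩
      rw [heq] at hd
      exact hgle B hB' hd
    exact hGdisj A (hG₂G hA') B (hG₂G hB') hnd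
  have hHcard : H.card = G₀.card + 𝒞.card + G₂.card := by
    rw [hHdef, Finset.card_union_of_disjoint hd2, Finset.card_union_of_disjoint hd1,
      Finset.card_image_of_injOn hinj]
  -- counting the cores hit: ∑_{A ∈ G} |t A| ≤ |𝒞|
  have htdisj : ∀ A ∈ G, ∀ B ∈ G, A ≠ B → Disjoint (t A) (t B) := by
    intro A hA B hB hne
    rw [Finset.disjoint_left]
    intro C hCA hCB
    have h1 := Finset.mem_filter.mp hCA
    have h2 := Finset.mem_filter.mp hCB
    have hsubA := (hcontain C (h𝒞 C h1.1) A (hGFk A hA) h1.2).1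
    have hsubB := (hcontain C (h𝒞 C h2.1) B (hGFk B hB) h2.2).1
    obtain ⟨x, hx⟩ := h𝒞ne C h1.1
    exact hne (hGdisj A hA B hB (Finset.not_disjoint_iff.mpr ⟨x, hsubA hx, hsubB hx⟩))
  have hsum_le : ∑ A ∈ G, (t A).card ≤ 𝒞.card := by
    rw [← Finset.card_biUnion htdisj]
    exact Finset.card_le_card (Finset.biUnion_subset.mpr (fun A _ => Finset.filter_subset _ _))
  have hd12 : Disjoint G₁ G₂ := by
    rw [Finset.disjoint_left]
    intro a h1 h2
    have := (Finset.mem_filter.mp h1).2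
    have := (Finset.mem_filter.mp h2).2
    omega
  have hsum_ge : 2 * G₁.card + G₂.card ≤ ∑ A ∈ G, (t A).card := by
    have hsubU : G₁ ∪ G₂ ⊆ G := Finset.union_subset hG₁G hG₂G
    have h1 : ∑ A ∈ G₁ ∪ G₂, (t A).card ≤ ∑ A ∈ G, (t A).card :=
      Finset.sum_le_sum_of_subset hsubU
    rw [Finset.sum_union hd12] at h1
    have e1 : 2 * G₁.card ≤ ∑ A ∈ G₁, (t A).card := by
      have := Finset.card_nsmul_le_sum G₁ (fun A => (t A).card) 2
        (fun A hA => (Finset.mem_filter.mp hA).2)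
      simpa [smul_eq_mul, mul_comm] using this
    have e2 : ∑ A ∈ G₂, (t A).card = G₂.card := by
      rw [Finset.sum_congr rfl (fun A hA => (Finset.mem_filter.mp hA).2)]
      rw [Finset.sum_const, smul_eq_mul, mul_one]
    omega
  -- G splits into G₀, G₁, G₂
  have hd01 : Disjoint G₀ G₁ := by
    rw [Finset.disjoint_left]
    intro a h1 h2
    have := (Finset.mem_filter.mp h1).2
    have := (Finset.mem_filter.mp h2).2
    omega
  have hd02 : Disjoint G₀ G₂ := by
    rw [Finset.disjoint_left]
    intro a h1 h2
    have := (Finset.mem_filter.mp h1).2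
    have := (Finset.mem_filter.mp h2).2
    omega
  have hGsplit : G₀.card + G₁.card + G₂.card = G.card := by
    have hu : G₀ ∪ G₁ ∪ G₂ = G := by
      ext a
      simp only [Finset.mem_union, hG₀def, hG₁def, hG₂def, Finset.mem_filter]
      constructor
      · rintro ((h | h) | h) <;> exact h.1
      · intro ha
        have : (t a).card = 0 ∨ 2 ≤ (t a).card ∨ (t a).card = 1 := by omega
        tauto
    rw [← hu, Finset.card_union_of_disjoint, Finset.card_union_of_disjoint hd01]
    rw [Finset.disjoint_union_left]
    exact ⟨hd02, hd12⟩
  -- conclude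
  have hHnu : H.card ≤ Fk.powerset.sup f := hnu_ge H hHsub hHpair
  omega
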